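/- Let S : ℝ → ℝ be locally bounded and subadditive with S(0) = 0, satisfying the weak Heiberg–Seneta condition: there is a locally Steinhaus–Weil set Σ ⊆ (0,∞) accumulating at 0 with limsup_{t↓0, t∈Σ} S(t)/t < ∞. Let 𝔸 be a dense, divisible additive subgroup of ℝ such that S|𝔸 is additive: S(a+b) = S(a) + S(b) for all a, b ∈ 𝔸. Then S is linear on all of ℝ: S(t) = β_S·t for every t ∈ ℝ, where β_S := inf_{t>0} S(t)/t. -/

import Mathlib

open Filter Topology Set Pointwise

/-- `S` is subadditive on `ℝ`. -/
def Subadditive' (S : ℝ → ℝ) : Prop := ∀ x y : ℝ, S (x + y) ≤ S x + S y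

/-- `S` is locally bounded: bounded on every bounded interval. -/
def LocallyBounded' (S : ℝ → ℝ) : Prop :=
  ∀ r : ℝ, 0 < r → ∃ M : ℝ, ∀ x : ℝ, |x| ≤ r → |S x| ≤ M

/-- `Σ ⊆ ℝ` is locally Steinhaus–Weil: for `x, y ∈ Σ` and all sufficiently small
`δ > 0`, `x + y` lies in the interior of `Σ_x^δ + Σ_y^δ` and `x - y` lies in the
interior of `Σ_x^δ - Σ_y^δ`, where `Σ_z^δ := Σ ∩ (z - δ, z + δ)`. -/
def LocallySW (Sig : Set ℝ) : Prop :=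
  ∀ x ∈ Sig, ∀ y ∈ Sig, ∃ δ₀ : ℝ, 0 < δ₀ ∧ ∀ δ : ℝ, 0 < δ → δ ≤ δ₀ →
    x + y ∈ interior ((Sig ∩ Set.Ioo (x - δ) (x + δ)) + (Sig ∩ Set.Ioo (y - δ) (y + δ))) ∧
    x - y ∈ interior ((Sig ∩ Set.Ioo (x - δ) (x + δ)) - (Sig ∩ Set.Ioo (y - δ) (y + δ)))

/-- `β_S := inf_{t>0} S t / t`. -/
noncomputable def betaS (S : ℝ → ℝ) : ℝ :=
  sInf ((fun t => S t / t) '' Set.Ioi (0 : ℝ))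

lemma aux_le_zero {x : ℝ} (h : ∀ θ : ℝ, 0 < θ → x ≤ θ) : x ≤ 0 := by
  by_contra hne
  push_neg at hne
  have := h (x / 2) (by linarith)
  linarith

lemma aux_eq_zero {x : ℝ} (hx : 0 ≤ x) (h : ∀ θ : ℝ, 0 < θ → x ≤ θ) : x = 0 :=
  le_antisymm (aux_le_zero h) hx

lemma aux_linear (S : ℝ → ℝ) (hlb : LocallyBounded' S) (h0 : S 0 = 0)
    (A : AddSubgroup ℝ) (hdense : Dense (A : Set ℝ))
    (hdiv : ∀ a ∈ A, ∀ k : ℕ, 0 < k → a / (k : ℝ) ∈ A)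
    (hadd : ∀ a ∈ A, ∀ b ∈ A, S (a + b) = S a + S b) :
    ∃ c : ℝ, ∀ a ∈ A, S a = c * a := by
  have hneg : ∀ a ∈ A, S (-a) = - S a := by
    intro a ha
    have := hadd a ha (-a) (neg_mem ha)
    rw [add_neg_cancel, h0] at this
    linarith
  have hnat : ∀ a ∈ A, ∀ n : ℕ, S ((n : ℝ) * a) = (n : ℝ) * S a := by
    intro a ha n
    induction n with
    | zero => simpa using h0
    | succ n ih =>
      have hmem : (n : ℝ) * a ∈ A := by
        have := AddSubgroup.nsmul_mem A ha n
        simpa [nsmul_eq_mul] using this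
      have := hadd _ hmem a ha
      push_cast
      rw [add_mul, one_mul, this, ih]
      ring
  have hint : ∀ a ∈ A, ∀ m : ℤ, S ((m : ℝ) * a) = (m : ℝ) * S a := by
    intro a ha m
    rcases m with n | n
    · exact_mod_cast hnat a ha n
    · have hmem : ((n : ℝ) + 1) * a ∈ A := by
        have := AddSubgroup.nsmul_mem A ha (n + 1)
        simpa [nsmul_eq_mul] using this
      have h1 : S (-(((n : ℝ) + 1) * a)) = - S (((n : ℝ) + 1) * a) := hneg _ hmem
      have h2 : S (((n : ℝ) + 1) * a) = ((n : ℝ) + 1) * S a := by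
        have := hnat a ha (n + 1); push_cast at this ⊢; linarith
      have h3 : ((Int.negSucc n : ℤ) : ℝ) = -((n : ℝ) + 1) := by push_cast; ring
      rw [h3, show (-((n : ℝ) + 1)) * a = -(((n : ℝ) + 1) * a) by ring, h1, h2]
      ring
  have hdvd : ∀ a ∈ A, ∀ n : ℕ, 0 < n → S (a / (n : ℝ)) = S a / (n : ℝ) := by
    intro a ha n hn
    have hnR : (0 : ℝ) < (n : ℝ) := by exact_mod_cast hn
    have := hnat (a / (n : ℝ)) (hdiv a ha n hn) n
    rw [mul_div_cancel₀ a (ne_of_gt hnR)] at this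
    field_simp [this]; linarith
  have hratmem : ∀ a ∈ A, ∀ q : ℚ, (q : ℝ) * a ∈ A := by
    intro a ha q
    have hd : a / (q.den : ℝ) ∈ A := hdiv a ha q.den q.pos
    have hz := AddSubgroup.zsmul_mem A hd q.num
    have hden : ((q.den : ℝ)) ≠ 0 := by positivity
    have heq : (q : ℝ) * a = q.num • (a / (q.den : ℝ)) := by
      rw [zsmul_eq_mul, Rat.cast_def]
      field_simp
    rwa [heq]
  have hrat : ∀ a ∈ A, ∀ q : ℚ, S ((q : ℝ) * a) = (q : ℝ) * S a := by
    intro a ha q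
    have hd : a / (q.den : ℝ) ∈ A := hdiv a ha q.den q.pos
    have hden : ((q.den : ℝ)) ≠ 0 := by positivity
    have heq : (q : ℝ) * a = ((q.num : ℤ) : ℝ) * (a / (q.den : ℝ)) := by
      rw [Rat.cast_def]; field_simp
    rw [heq, hint _ hd q.num, hdvd a ha q.den q.pos, Rat.cast_def]
    ring
  obtain ⟨a₀, ha₀A, ha₀U⟩ := hdense.exists_mem_open isOpen_Ioo
    (nonempty_Ioo.2 (by norm_num : (0:ℝ) < 1))
  have ha₀pos : (0:ℝ) < a₀ := ha₀U.1
  refine ⟨S a₀ / a₀, ?_⟩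
  intro b hb
  obtain ⟨M, hM⟩ := hlb 1 one_pos
  have hM0 : 0 ≤ M := le_trans (abs_nonneg _) (hM 0 (by norm_num))
  set c : ℝ := S a₀ / a₀ with hc
  set C : ℝ := M + |S a₀| / a₀ with hC
  have hC0 : 0 ≤ C := by
    have : 0 ≤ |S a₀| / a₀ := div_nonneg (abs_nonneg _) ha₀pos.le
    simp only [hC]; linarith
  have key : ∀ N : ℕ, 0 < N → |S b - c * b| ≤ C / N := by
    intro N hN
    have hNR : (0 : ℝ) < (N : ℝ) := by exact_mod_cast hN
    obtain ⟨q, hq1, hq2⟩ := exists_rat_btwn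
      (show (b - 1 / N) / a₀ < (b + 1 / N) / a₀ by
        apply div_lt_div_of_pos_right ?_ ha₀pos
        · have : (0:ℝ) < 1 / N := by positivity
          linarith)
    have hqa1 : b - 1 / N < (q : ℝ) * a₀ := by
      have := (div_lt_iff₀ ha₀pos).mp hq1
      linarith
    have hqa2 : (q : ℝ) * a₀ < b + 1 / N := by
      have := (lt_div_iff₀ ha₀pos).mp hq2
      linarith
    have habs : |(q : ℝ) * a₀ - b| ≤ 1 / N := by
      rw [abs_le]; constructor <;> linarith
    have hmem1 : (q : ℝ) * a₀ - b ∈ A := sub_mem (hratmem a₀ ha₀A q) hb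
    set u : ℝ := (q : ℝ) * a₀ - b with hu
    have hmemx : (N : ℝ) * u ∈ A := by
      have := AddSubgroup.nsmul_mem A hmem1 N
      simpa [nsmul_eq_mul] using this
    have hxabs : |(N : ℝ) * u| ≤ 1 := by
      rw [abs_mul, abs_of_pos hNR]
      calc (N : ℝ) * |u| ≤ (N : ℝ) * (1 / N) := by
            exact mul_le_mul_of_nonneg_left habs hNR.le
        _ = 1 := by field_simp
    have hSx : S ((N : ℝ) * u) = (N : ℝ) * ((q : ℝ) * S a₀ - S b) := by
      rw [hnat _ hmem1 N]
      congr 1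
      have : S u = S ((q : ℝ) * a₀) + S (-b) := by
        rw [hu, sub_eq_add_neg]
        exact hadd _ (hratmem a₀ ha₀A q) _ (neg_mem hb)
      rw [this, hrat a₀ ha₀A q, hneg b hb]
      ring
    have hb1 : |(q : ℝ) * S a₀ - S b| ≤ M / N := by
      have h1 : |S ((N : ℝ) * u)| ≤ M := hM _ hxabs
      rw [hSx, abs_mul, abs_of_pos hNR] at h1
      rw [le_div_iff₀ hNR]
      linarith [h1]
    have hb2 : |(q : ℝ) * S a₀ - c * b| ≤ (|S a₀| / a₀) / N := by
      have heq : (q : ℝ) * S a₀ - c * b = S a₀ * u / a₀ := by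
        rw [hc, hu]; field_simp
      rw [heq, abs_div, abs_mul, abs_of_pos ha₀pos]
      calc |S a₀| * |u| / a₀ ≤ |S a₀| * (1 / N) / a₀ := by
            gcongr
        _ = (|S a₀| / a₀) / N := by ring
    calc |S b - c * b| ≤ |(q : ℝ) * S a₀ - S b| + |(q : ℝ) * S a₀ - c * b| := by
          have := abs_sub (S b - (q : ℝ) * S a₀) (c * b - (q : ℝ) * S a₀)
          rw [abs_sub_comm ((q:ℝ) * S a₀) (S b)]
          calc |S b - c * b| = |(S b - (q : ℝ) * S a₀) + ((q : ℝ) * S a₀ - c * b)| := by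
                ring_nf
            _ ≤ |S b - (q : ℝ) * S a₀| + |(q : ℝ) * S a₀ - c * b| := abs_add_le _ _
      _ ≤ M / N + (|S a₀| / a₀) / N := add_le_add hb1 hb2
      _ = C / N := by rw [hC]; ring
  have : |S b - c * b| = 0 := by
    apply aux_eq_zero (abs_nonneg _)
    intro θ hθ
    obtain ⟨N, hN⟩ := exists_nat_gt (C / θ)
    have hNpos : 0 < N := by
      by_contra h
      push_neg at h
      interval_cases N
      simp at hN
      have : 0 ≤ C / θ := div_nonneg hC0 hθ.le
      linarith
    have hNR : (0 : ℝ) < (N : ℝ) := by exact_mod_cast hNpos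
    calc |S b - c * b| ≤ C / N := key N hNpos
      _ ≤ θ := by
          rw [div_le_iff₀ hNR]
          have := (div_lt_iff₀ hθ).mp hN
          linarith
  have := abs_eq_zero.mp this
  linarith

/-- Additive particular case of the paper's Theorem 5: for `S` locally bounded
and subadditive with `S 0 = 0`, satisfying the weak Heiberg–Seneta condition
(w.r.t. a locally Steinhaus–Weil set `Σ ⊆ (0,∞)` accumulating at `0`), and
additive on a dense divisible additive subgroup `𝔸` of `ℝ`, the function `S` is
linear on all of `ℝ`: `S t = β_S·t` for every `t`. -/
theorem berz_theorem5_additive (S : ℝ → ℝ) (hlb : LocallyBounded' S) (hsub : Subadditive' S)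
    (h0 : S 0 = 0)
    (Sig : Set ℝ) (hSig : Sig ⊆ Set.Ioi (0 : ℝ)) (hSW : LocallySW Sig)
    (hacc : AccPt (0 : ℝ) (𝓟 Sig))
    (hWHS : Filter.limsup (fun t : ℝ => ((S t / t : ℝ) : EReal)) (𝓝[Sig] (0 : ℝ)) < ⊤)
    (A : AddSubgroup ℝ) (hdense : Dense (A : Set ℝ))
    (hdiv : ∀ a ∈ A, ∀ k : ℕ, 0 < k → a / (k : ℝ) ∈ A)
    (hadd : ∀ a ∈ A, ∀ b ∈ A, S (a + b) = S a + S b) :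
    ∀ t : ℝ, S t = betaS S * t := by
  obtain ⟨c, hlinA⟩ := aux_linear S hlb h0 A hdense hdiv hadd
  set T : ℝ → ℝ := fun x => S x - c * x with hT
  have hTsub : ∀ x y : ℝ, T (x + y) ≤ T x + T y := by
    intro x y
    have := hsub x y
    simp only [hT]
    nlinarith [this]
  have hTper : ∀ a ∈ A, ∀ x : ℝ, T (x + a) = T x := by
    intro a ha x
    have hSa : S a = c * a := hlinA a ha
    have hSna : S (-a) = c * (-a) := by
      rw [hlinA (-a) (neg_mem ha)]
    have h1 := hsub x a
    have h2 := hsub (x + a) (-a)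
    rw [add_neg_cancel_right] at h2
    simp only [hT]
    nlinarith [h1, h2]
  -- extract the real bound K from the weak Heiberg–Seneta condition
  obtain ⟨K, hK1, -⟩ := EReal.lt_iff_exists_real_btwn.mp hWHS
  have hev : ∀ᶠ t in 𝓝[Sig] (0:ℝ), ((S t / t : ℝ) : EReal) < (K : EReal) :=
    Filter.eventually_lt_of_limsup_lt hK1
  obtain ⟨ε, hε, hball⟩ := Metric.mem_nhdsWithin_iff.mp hev
  set K' : ℝ := max (K - c) 0 with hK'
  have hK'0 : 0 ≤ K' := le_max_right _ _
  have hTbound : ∀ t ∈ Sig, t < ε → T t ≤ K' * t := by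
    intro t ht hlt
    have htpos : (0:ℝ) < t := hSig ht
    have htball : t ∈ Metric.ball (0:ℝ) ε := by
      simp [Real.dist_eq, abs_of_pos htpos, hlt]
    have := hball ⟨htball, ht⟩
    have hlt' : S t / t < K := by exact_mod_cast this
    have hst : S t < K * t := by
      have := (div_lt_iff₀ htpos).mp hlt'
      linarith
    simp only [hT]
    have : K - c ≤ K' := le_max_left _ _
    nlinarith
  -- main claim : T x ≤ θ for every θ > 0
  have hmain : ∀ x : ℝ, ∀ θ : ℝ, 0 < θ → T x ≤ θ := by
    intro x θ hθ
    set ρ : ℝ := min (ε / 2) (θ / (4 * (K' + 1))) with hρ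
    have hρpos : 0 < ρ := lt_min (by linarith) (by positivity)
    obtain ⟨σ, ⟨hσball, hsigS⟩, -⟩ := accPt_iff_nhds.mp hacc (Metric.ball 0 ρ)
      (Metric.ball_mem_nhds 0 hρpos)
    have hσpos : (0:ℝ) < σ := hSig hsigS
    have hσρ : σ < ρ := by
      have := hσball
      rw [Metric.mem_ball, Real.dist_eq, sub_zero, abs_of_pos hσpos] at this
      exact this
    obtain ⟨δ₀, hδ₀, hSWp⟩ := hSW σ hsigS σ hsigS
    set δ : ℝ := min δ₀ σ with hδdef
    have hδpos : 0 < δ := lt_min hδ₀ hσpos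
    have hδσ : δ ≤ σ := min_le_right _ _
    obtain ⟨hin, -⟩ := hSWp δ hδpos (min_le_left _ _)
    rw [mem_interior_iff_mem_nhds] at hin
    obtain ⟨η, hη, hb2⟩ := Metric.mem_nhds_iff.mp hin
    obtain ⟨a, haA, haB⟩ := hdense.exists_mem_open Metric.isOpen_ball
      (Metric.nonempty_ball.mpr hη) (U := Metric.ball (σ + σ - x) η)
    have hxa : x + a ∈ Metric.ball (σ + σ) η := by
      rw [Metric.mem_ball, Real.dist_eq] at haB ⊢
      have : x + a - (σ + σ) = a - (σ + σ - x) := by ring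
      rw [this]; exact haB
    obtain ⟨s₁, hs₁, s₂, hs₂, hsum⟩ := Set.mem_add.mp (hb2 hxa)
    have hs1S : s₁ ∈ Sig := hs₁.1
    have hs2S : s₂ ∈ Sig := hs₂.1
    have hs₁lt : s₁ < ε := by
      have := hs₁.2.2
      have h2σ : σ + δ ≤ 2 * σ := by linarith
      have : s₁ < 2 * σ := by linarith
      have hσε : σ < ε / 2 := lt_of_lt_of_le hσρ (min_le_left _ _)
      linarith
    have hs₂lt : s₂ < ε := by
      have := hs₂.2.2
      have hσε : σ < ε / 2 := lt_of_lt_of_le hσρ (min_le_left _ _)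
      linarith
    have hT1 : T s₁ ≤ K' * s₁ := hTbound s₁ hs1S hs₁lt
    have hT2 : T s₂ ≤ K' * s₂ := hTbound s₂ hs2S hs₂lt
    have hs₁up : s₁ < 2 * σ := by have := hs₁.2.2; linarith
    have hs₂up : s₂ < 2 * σ := by have := hs₂.2.2; linarith
    have hTx : T x = T (s₁ + s₂) := by
      rw [← hTper a haA x, ← hsum]
    have hσθ : σ ≤ θ / (4 * (K' + 1)) := le_of_lt (lt_of_lt_of_le hσρ (min_le_right _ _))
    calc T x = T (s₁ + s₂) := hTx
      _ ≤ T s₁ + T s₂ := hTsub s₁ s₂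
      _ ≤ K' * s₁ + K' * s₂ := add_le_add hT1 hT2
      _ ≤ K' * (2 * σ) + K' * (2 * σ) := by
          apply add_le_add <;> exact mul_le_mul_of_nonneg_left (by linarith) hK'0
      _ = 4 * K' * σ := by ring
      _ ≤ θ := by
          have h1 : 4 * K' * σ ≤ 4 * K' * (θ / (4 * (K' + 1))) := by
            apply mul_le_mul_of_nonneg_left hσθ (by positivity)
          have h2 : 4 * K' * (θ / (4 * (K' + 1))) ≤ θ := by
            have hd : (0:ℝ) < 4 * (K' + 1) := by positivity
            calc 4 * K' * (θ / (4 * (K' + 1))) ≤ 4 * (K' + 1) * (θ / (4 * (K' + 1))) :=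
                  mul_le_mul_of_nonneg_right (by linarith) (by positivity)
              _ = θ := by field_simp
          linarith
  have hTle : ∀ x : ℝ, T x ≤ 0 := fun x => aux_le_zero (hmain x)
  have hupper : ∀ x : ℝ, S x ≤ c * x := by
    intro x
    have := hTle x
    simp only [hT] at this
    linarith
  have hlin : ∀ x : ℝ, S x = c * x := by
    intro x
    have h1 := hupper x
    have h2 := hupper (-x)
    have h3 := hsub x (-x)
    rw [add_neg_cancel, h0] at h3
    nlinarith
  have hbeta : betaS S = c := by
    have himg : (fun t => S t / t) '' Set.Ioi (0:ℝ) = {c} := by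
      ext y
      simp only [Set.mem_image, Set.mem_Ioi, Set.mem_singleton_iff]
      constructor
      · rintro ⟨t, ht, rfl⟩
        rw [hlin t, mul_div_assoc, div_self (ne_of_gt ht), mul_one]
      · rintro rfl
        exact ⟨1, one_pos, by rw [hlin 1]; norm_num⟩
    rw [betaS, himg, csInf_singleton]
  intro t
  rw [hbeta, hlin t]
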